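/- Let N ≥ 2 and let M = (m_{i,j}) ∈ M(N,r) with λ = ro(M) and μ = co(M). Fix h with 1 ≤ h < N and λ_{h+1} ≥ 1, and set λ⁺ = λ + e_h − e_{h+1} ∈ Λ(N,r), where e_i ∈ ℕ^N is the i-th standard basis vector. Then the set product (W_{λ⁺}·W_λ)·(W_λ d_M W_μ) = {x·y : x ∈ W_{λ⁺}W_λ, y ∈ W_λ d_M W_μ} is equal to the union, over those k ∈ {1,…,N} with m_{h+1,k} ≥ 1, of the double cosets W_{λ⁺} d_{M⁺_{h,k}} W_μ, and these double cosets are pairwise disjoint. -/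

import Mathlib

open Equiv Finset

/-- The simple transposition `s i = (i, i+1)` (1-based) in the symmetric group `W` on
`{1, …, r}`, realised as `Equiv.Perm (Fin r)`, where the point `x : Fin r` carries the
label `x.val + 1`.  For `i` outside the range `1 ≤ i < r` we set `s i = 1`. -/
def sT (r : ℕ) (i : ℕ) : Equiv.Perm (Fin r) :=
  if h : 1 ≤ i ∧ i < r then Equiv.swap ⟨i - 1, by omega⟩ ⟨i, h.2⟩ else 1

/-- The ascending product `s_a · s_{a+1} ⋯ s_{a+n-1}` (equal to `1` when `n = 0`);
the rightmost factor acts first. -/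
def ascProd (r a n : ℕ) : Equiv.Perm (Fin r) :=
  ((List.range n).map (fun t => sT r (a + t))).prod

/-- The descending product `s_b · s_{b-1} ⋯ s_{b-n+1}` (equal to `1` when `n = 0`);
the rightmost factor acts first. -/
def descProd (r b n : ℕ) : Equiv.Perm (Fin r) :=
  ((List.range n).map (fun t => sT r (b - t))).prod

/-- The Coxeter length `ℓ(w)`, i.e. the number of inversions of `w`. -/
def clen {r : ℕ} (w : Equiv.Perm (Fin r)) : ℕ :=
  (Finset.univ.filter (fun p : Fin r × Fin r => p.1 < p.2 ∧ w p.2 < w p.1)).card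

/-- `ptil lam i` is the partial sum `λ̃_i = λ_1 + ⋯ + λ_i` (1-based `i`). -/
def ptil {N : ℕ} (lam : Fin N → ℕ) (i : ℕ) : ℕ :=
  ∑ l : Fin N, if l.val + 1 ≤ i then lam l else 0

/-- The block `N_i^λ = {λ̃_{i-1}+1, …, λ̃_i}` (1-based `i`), as a set of points of `Fin r`
(the point `x` has label `x.val + 1`). -/
def blockSet (r : ℕ) {N : ℕ} (lam : Fin N → ℕ) (i : ℕ) : Finset (Fin r) :=
  Finset.univ.filter (fun x => ptil lam (i - 1) ≤ x.val ∧ x.val < ptil lam i)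

/-- The index of the block of `λ` containing the point `x`. -/
def blockOf {r N : ℕ} (lam : Fin N → ℕ) (x : Fin r) : ℕ :=
  ((Finset.range N).filter (fun i => ptil lam (i + 1) ≤ x.val)).card

/-- The Young subgroup `W_λ`: all permutations stabilizing each block `N_i^λ`. -/
def young (r : ℕ) {N : ℕ} (lam : Fin N → ℕ) : Subgroup (Equiv.Perm (Fin r)) where
  carrier := {w | ∀ x : Fin r, blockOf lam (w x) = blockOf lam x}
  one_mem' := by intro x; rfl
  mul_mem' := by
    intro a b ha hb x
    have h := (ha (b x)).trans (hb x)
    simpa [Equiv.Perm.mul_apply] using h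
  inv_mem' := by
    intro a ha x
    have h := ha (a⁻¹ x)
    simpa using h.symm

/-- The double coset `W_λ d W_μ`, as a set of permutations. -/
def dcoset (r : ℕ) {N : ℕ} (lam mu : Fin N → ℕ) (d : Equiv.Perm (Fin r)) :
    Set (Equiv.Perm (Fin r)) :=
  {w | ∃ x ∈ young r lam, ∃ y ∈ young r mu, w = x * d * y}

/-- `d ∈ 𝒟_{λμ}`: `d` has minimal length in its double coset `W_λ d W_μ`. -/
def isMinRep (r : ℕ) {N : ℕ} (lam mu : Fin N → ℕ) (d : Equiv.Perm (Fin r)) : Prop :=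
  ∀ w ∈ dcoset r lam mu d, clen d ≤ clen w

/-- The composition `ro M` of row sums of a matrix. -/
def rowSums {N : ℕ} (M : Fin N → Fin N → ℕ) : Fin N → ℕ := fun i => ∑ j, M i j

/-- The composition `co M` of column sums of a matrix. -/
def colSums {N : ℕ} (M : Fin N → Fin N → ℕ) : Fin N → ℕ := fun j => ∑ i, M i j

/-- `d` is the distinguished double coset representative `d_M` attached to the matrix `M`:
`d` is the minimal length element in its `(W_{ro M}, W_{co M})` double coset, and
`|N_i^{ro M} ∩ d(N_j^{co M})| = m_{i,j}` for all `i, j`. -/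
def isDM (r : ℕ) {N : ℕ} (M : Fin N → Fin N → ℕ) (d : Equiv.Perm (Fin r)) : Prop :=
  isMinRep r (rowSums M) (colSums M) d ∧
    ∀ i j : Fin N,
      ((blockSet r (rowSums M) (i.val + 1)) ∩
        (blockSet r (colSums M) (j.val + 1)).image d).card = M i j

/-- The `(i,j)` entry of `M` with 1-based indices (`0` outside the range). -/
def ent {N : ℕ} (M : Fin N → Fin N → ℕ) (i j : ℕ) : ℕ :=
  if h : 1 ≤ i ∧ i ≤ N ∧ 1 ≤ j ∧ j ≤ N then M ⟨i - 1, by omega⟩ ⟨j - 1, by omega⟩ else 0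

/-- `μ̃_{j-1}` for `μ = co M`: the sum of the first `j - 1` column sums of `M`. -/
def colPS {N : ℕ} (M : Fin N → Fin N → ℕ) (j : ℕ) : ℕ :=
  ∑ p : Fin N × Fin N, if p.2.val + 1 < j then M p.1 p.2 else 0

/-- `σ_{i,j} = μ̃_{j-1} + Σ_{k ≤ i, l ≥ j} m_{k,l}` (1-based `i, j`). -/
def sigmaS {N : ℕ} (M : Fin N → Fin N → ℕ) (i j : ℕ) : ℕ :=
  colPS M j + ∑ p : Fin N × Fin N, if p.1.val + 1 ≤ i ∧ j ≤ p.2.val + 1 then M p.1 p.2 else 0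

/-- `m̃_{i,j} = μ̃_{j-1} + Σ_{h ≤ i} m_{h,j}` (1-based `i, j`): the partial sum of the
column-reading sequence of `M` up to the entry `(i, j)`. -/
def mtil {N : ℕ} (M : Fin N → Fin N → ℕ) (i j : ℕ) : ℕ :=
  colPS M j + ∑ p : Fin N × Fin N, if p.1.val + 1 ≤ i ∧ p.2.val + 1 = j then M p.1 p.2 else 0

/-- The element `w_{i,j}` (1-based `i, j`):
`w_{i,j} = (s_{σ_{i-1,j}} ⋯ s_{m̃_{i-1,j}+1})(s_{σ_{i-1,j}+1} ⋯ s_{m̃_{i-1,j}+2}) ⋯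
(s_{σ_{i-1,j}+m_{i,j}-1} ⋯ s_{m̃_{i,j}})`, with `w_{i,j} = 1` when `m_{i,j} = 0` or
`σ_{i-1,j} = m̃_{i-1,j}`. -/
def wE (r : ℕ) {N : ℕ} (M : Fin N → Fin N → ℕ) (i j : ℕ) : Equiv.Perm (Fin r) :=
  ((List.range (ent M i j)).map
    (fun x => descProd r (sigmaS M (i - 1) j + x) (sigmaS M (i - 1) j - mtil M (i - 1) j))).prod

/-- The column product `w_{2,j} w_{3,j} ⋯ w_{N,j}`. -/
def colProd (r : ℕ) {N : ℕ} (M : Fin N → Fin N → ℕ) (j : ℕ) : Equiv.Perm (Fin r) :=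
  ((List.range (N - 1)).map (fun t => wE r M (t + 2) j)).prod

/-- `Π_t`: the product of the first `t` column products
`(w_{2,1} ⋯ w_{N,1})(w_{2,2} ⋯ w_{N,2}) ⋯ (w_{2,t} ⋯ w_{N,t})`. -/
def piProd (r : ℕ) {N : ℕ} (M : Fin N → Fin N → ℕ) (t : ℕ) : Equiv.Perm (Fin r) :=
  ((List.range t).map (fun c => colProd r M (c + 1))).prod

section Aux
variable {r N : ℕ}

lemma mem_young {lam : Fin N → ℕ} {w : Equiv.Perm (Fin r)} :
    w ∈ young r lam ↔ ∀ x : Fin r, blockOf lam (w x) = blockOf lam x := Iff.rfl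

lemma ptil_mono (lam : Fin N → ℕ) : Monotone (ptil lam) := by
  intro a b hab
  apply Finset.sum_le_sum
  intro l _
  split_ifs <;> omega

lemma ptil_N (lam : Fin N → ℕ) : ptil lam N = ∑ l, lam l := by
  unfold ptil
  apply Finset.sum_congr rfl
  intro l _
  simp [Nat.succ_le_of_lt l.isLt]

lemma ptil_succ (lam : Fin N → ℕ) {j : ℕ} (hj : j < N) :
    ptil lam (j + 1) = ptil lam j + lam ⟨j, hj⟩ := by
  unfold ptil
  have : ∀ l : Fin N, (if l.val + 1 ≤ j + 1 then lam l else 0)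
      = (if l.val + 1 ≤ j then lam l else 0) + (if l.val = j then lam l else 0) := by
    intro l; split_ifs <;> omega
  rw [Finset.sum_congr rfl (fun l _ => this l), Finset.sum_add_distrib]
  congr 1
  rw [Finset.sum_eq_single (⟨j, hj⟩ : Fin N)]
  · simp
  · intro b _ hb
    have hbv : b.val ≠ j := fun hc => hb (Fin.ext hc)
    simp [hbv]
  · simp

lemma blockOf_spec {lam : Fin N → ℕ} (hs : ptil lam N = r) (x : Fin r) :
    ptil lam (blockOf lam x) ≤ x.val ∧ x.val < ptil lam (blockOf lam x + 1)
      ∧ blockOf lam x < N := by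
  classical
  let S : Finset ℕ := (Finset.range N).filter (fun i => ptil lam (i + 1) ≤ x.val)
  have hmemS : ∀ i : ℕ, i ∈ S ↔ i < N ∧ ptil lam (i + 1) ≤ x.val := by
    intro i; simp [S]
  have hbdef : blockOf lam x = S.card := rfl
  have hdc : ∀ i j : ℕ, i ≤ j → j ∈ S → i ∈ S := by
    intro i j hij hj
    rw [hmemS] at hj ⊢
    exact ⟨lt_of_le_of_lt hij hj.1, le_trans (ptil_mono lam (by omega)) hj.2⟩
  have hxr : x.val < r := x.isLt
  have hN1 : 1 ≤ N := by
    by_contra hc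
    have hn0 : N = 0 := by omega
    subst hn0
    have : ptil lam 0 = 0 := by simp [ptil]
    omega
  have hlast : (N - 1) ∉ S := by
    rw [hmemS]
    rintro ⟨-, hle⟩
    have heq : N - 1 + 1 = N := by omega
    rw [heq, hs] at hle
    omega
  have hbN : S.card < N := by
    have hsub : S ⊆ (Finset.range N).erase (N - 1) := by
      intro j hj
      refine Finset.mem_erase.2 ⟨?_, Finset.mem_range.2 ((hmemS j).1 hj).1⟩
      rintro rfl; exact hlast hj
    calc S.card ≤ ((Finset.range N).erase (N - 1)).card := Finset.card_le_card hsub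
      _ = N - 1 := by rw [Finset.card_erase_of_mem (by simp; omega), Finset.card_range]
      _ < N := by omega
  have hbnotmem : S.card ∉ S := by
    intro hmem
    have hsub : Finset.range (S.card + 1) ⊆ S := by
      intro i hi
      exact hdc i S.card (by simpa using Nat.lt_succ_iff.1 (Finset.mem_range.1 hi)) hmem
    have := Finset.card_le_card hsub
    simp at this
  have hupper : x.val < ptil lam (S.card + 1) := by
    by_contra hc
    exact hbnotmem ((hmemS S.card).2 ⟨hbN, by omega⟩)
  have hlower : ptil lam S.card ≤ x.val := by
    rcases Nat.eq_zero_or_pos S.card with h0 | h0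
    · rw [h0]; simp [ptil]
    · have hmem : S.card - 1 ∈ S := by
        by_contra hc
        have hsub : S ⊆ Finset.range (S.card - 1) := by
          intro j hj
          rw [Finset.mem_range]
          by_contra hjc
          exact hc (hdc (S.card - 1) j (by omega) hj)
        have := Finset.card_le_card hsub
        simp at this
        omega
      have h2 := ((hmemS _).1 hmem).2
      have heq : S.card - 1 + 1 = S.card := by omega
      rwa [heq] at h2
  rw [hbdef]
  exact ⟨hlower, hupper, hbN⟩

lemma blockOf_eq_iff {lam : Fin N → ℕ} (hs : ptil lam N = r) (x : Fin r) (i : ℕ) :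
    blockOf lam x = i ↔ ptil lam i ≤ x.val ∧ x.val < ptil lam (i + 1) := by
  obtain ⟨h1, h2, h3⟩ := blockOf_spec hs x
  constructor
  · rintro rfl; exact ⟨h1, h2⟩
  · rintro ⟨h4, h5⟩
    rcases lt_trichotomy (blockOf lam x) i with hlt | heq | hgt
    · have : ptil lam (blockOf lam x + 1) ≤ ptil lam i := ptil_mono lam (by omega)
      omega
    · exact heq
    · have : ptil lam (i + 1) ≤ ptil lam (blockOf lam x) := ptil_mono lam (by omega)
      omega

end Aux

section Aux2
variable {r N : ℕ}

/-- The intersection-matrix entry `|N_i^λ ∩ w(N_j^μ)|`, in `blockOf` form. -/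
def IM (r : ℕ) {N : ℕ} (lam mu : Fin N → ℕ) (w : Equiv.Perm (Fin r)) (i j : ℕ) : ℕ :=
  (Finset.univ.filter
    (fun x : Fin r => blockOf lam (w x) = i ∧ blockOf mu x = j)).card

lemma card_filter_comp_perm (σ : Equiv.Perm (Fin r)) (P : Fin r → Prop) [DecidablePred P] :
    (Finset.univ.filter (fun p => P (σ p))).card = (Finset.univ.filter P).card := by
  apply Finset.card_bij (fun p _ => σ p)
  · intro a ha
    simp only [Finset.mem_filter, Finset.mem_univ, true_and] at ha ⊢
    exact ha
  · intro a _ b _ hab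
    exact σ.injective hab
  · intro b hb
    refine ⟨σ⁻¹ b, ?_, by simp⟩
    simp only [Finset.mem_filter, Finset.mem_univ, true_and] at hb ⊢
    simpa using hb

lemma IM_mul {lam mu : Fin N → ℕ} {x z : Equiv.Perm (Fin r)} (w : Equiv.Perm (Fin r))
    (hx : x ∈ young r lam) (hz : z ∈ young r mu) (i j : ℕ) :
    IM r lam mu (x * w * z) i j = IM r lam mu w i j := by
  unfold IM
  have hcongr : ∀ p : Fin r,
      (blockOf lam ((x * w * z) p) = i ∧ blockOf mu p = j)
        ↔ (blockOf lam (w (z p)) = i ∧ blockOf mu (z p) = j) := by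
    intro p
    have h1 : blockOf lam ((x * w * z) p) = blockOf lam (w (z p)) := hx (w (z p))
    have h2 : blockOf mu (z p) = blockOf mu p := hz p
    rw [h1, h2]
  calc (Finset.univ.filter
        (fun p : Fin r => blockOf lam ((x * w * z) p) = i ∧ blockOf mu p = j)).card
      = (Finset.univ.filter
        (fun p : Fin r => blockOf lam (w (z p)) = i ∧ blockOf mu (z p) = j)).card := by
        congr 1
        exact Finset.filter_congr (fun p _ => hcongr p)
    _ = (Finset.univ.filter
        (fun p : Fin r => blockOf lam (w p) = i ∧ blockOf mu p = j)).card :=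
        card_filter_comp_perm z (fun p => blockOf lam (w p) = i ∧ blockOf mu p = j)

lemma IM_eq_inter_card {lam mu : Fin N → ℕ} (hs1 : ptil lam N = r) (hs2 : ptil mu N = r)
    (w : Equiv.Perm (Fin r)) (i j : ℕ) :
    ((blockSet r lam (i + 1)) ∩ (blockSet r mu (j + 1)).image w).card
      = IM r lam mu w i j := by
  classical
  unfold IM
  symm
  apply Finset.card_bij (fun x _ => w x)
  · intro a ha
    simp only [Finset.mem_filter, Finset.mem_univ, true_and] at ha
    rw [Finset.mem_inter]
    constructor
    · simp only [blockSet, Finset.mem_filter, Finset.mem_univ, true_and,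
        Nat.add_sub_cancel]
      exact (blockOf_eq_iff hs1 (w a) i).1 ha.1
    · refine Finset.mem_image.2 ⟨a, ?_, rfl⟩
      simp only [blockSet, Finset.mem_filter, Finset.mem_univ, true_and,
        Nat.add_sub_cancel]
      exact (blockOf_eq_iff hs2 a j).1 ha.2
  · intro a _ b _ hab
    exact w.injective hab
  · intro b hb
    rw [Finset.mem_inter] at hb
    obtain ⟨a, ha, rfl⟩ := Finset.mem_image.1 hb.2
    refine ⟨a, ?_, rfl⟩
    have h1 := hb.1
    simp only [blockSet, Finset.mem_filter, Finset.mem_univ, true_and,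
      Nat.add_sub_cancel] at h1 ha
    simp only [Finset.mem_filter, Finset.mem_univ, true_and]
    exact ⟨(blockOf_eq_iff hs1 (w a) i).2 h1, (blockOf_eq_iff hs2 a j).2 ha⟩

lemma IM_out {lam mu : Fin N → ℕ} (hs1 : ptil lam N = r) (hs2 : ptil mu N = r)
    (w : Equiv.Perm (Fin r)) {i j : ℕ} (hij : N ≤ i ∨ N ≤ j) :
    IM r lam mu w i j = 0 := by
  unfold IM
  rw [Finset.card_eq_zero, Finset.filter_eq_empty_iff]
  intro x _
  rintro ⟨h1, h2⟩
  rcases hij with hi | hj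
  · have := (blockOf_spec hs1 (w x)).2.2
    omega
  · have := (blockOf_spec hs2 x).2.2
    omega

lemma swap_mem_young {lam : Fin N → ℕ} {a b : Fin r}
    (hab : blockOf lam a = blockOf lam b) :
    Equiv.swap a b ∈ young r lam := by
  intro x
  rcases eq_or_ne x a with rfl | hxa
  · rw [Equiv.swap_apply_left]; exact hab.symm
  rcases eq_or_ne x b with rfl | hxb
  · rw [Equiv.swap_apply_right]; exact hab
  · rw [Equiv.swap_apply_of_ne_of_ne hxa hxb]

end Aux2

section Aux3
variable {r N : ℕ}

lemma le_count_eq {ι : Type*} [LinearOrder ι] (f g : Fin r → ι)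
    (hfg : ∀ c : ι, (Finset.univ.filter (fun p => f p = c)).card
      = (Finset.univ.filter (fun p => g p = c)).card) (a : ι) :
    (Finset.univ.filter (fun p => f p ≤ a)).card
      = (Finset.univ.filter (fun p => g p ≤ a)).card := by
  classical
  set T := ((Finset.univ.image f) ∪ (Finset.univ.image g)).filter (· ≤ a) with hT
  have key : ∀ F : Fin r → ι, (∀ p : Fin r, F p ∈ Finset.univ.image f ∪ Finset.univ.image g) →
      (Finset.univ.filter (fun p => F p ≤ a)).card
        = ∑ c ∈ T, (Finset.univ.filter (fun p => F p = c)).card := by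
    intro F hF
    rw [Finset.card_eq_sum_card_fiberwise (f := F) (t := T)
      (fun x hx => by
        simp only [Finset.mem_coe, Finset.mem_filter, Finset.mem_univ, true_and] at hx
        exact Finset.mem_filter.2 ⟨hF x, hx⟩)]
    apply Finset.sum_congr rfl
    intro c hc
    have hca : c ≤ a := (Finset.mem_filter.1 hc).2
    congr 1
    rw [Finset.filter_filter]
    apply Finset.filter_congr
    intro p _
    constructor
    · exact fun hp => hp.2
    · exact fun hp => ⟨hp ▸ hca, hp⟩
  rw [key f (fun p => Finset.mem_union_left _ (Finset.mem_image_of_mem f (Finset.mem_univ p))),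
    key g (fun p => Finset.mem_union_right _ (Finset.mem_image_of_mem g (Finset.mem_univ p)))]
  exact Finset.sum_congr rfl (fun c _ => hfg c)

lemma monotone_eq_of_fibers {ι : Type*} [LinearOrder ι] (F G : Fin r → ι)
    (hF : Monotone F) (hG : Monotone G)
    (hfg : ∀ c : ι, (Finset.univ.filter (fun p => F p = c)).card
      = (Finset.univ.filter (fun p => G p = c)).card) :
    F = G := by
  classical
  have hcount : ∀ a : ι, Fintype.card {i // F i ≤ a} = Fintype.card {i // G i ≤ a} := by
    intro a
    rw [Fintype.card_subtype, Fintype.card_subtype]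
    exact le_count_eq F G hfg a
  have hiff : ∀ (j : Fin r) (a : ι), F j ≤ a ↔ G j ≤ a := by
    intro j a
    rw [← Tuple.lt_card_le_iff_apply_le_of_monotone (a := a) (j := j) hF,
      ← Tuple.lt_card_le_iff_apply_le_of_monotone (a := a) (j := j) hG,
      ← Fintype.card_subtype, ← Fintype.card_subtype, hcount a]
  funext j
  exact le_antisymm ((hiff j (G j)).2 le_rfl) ((hiff j (F j)).1 le_rfl)

lemma exists_perm_of_fibers {ι : Type*} [LinearOrder ι] (f g : Fin r → ι)
    (hfg : ∀ c : ι, (Finset.univ.filter (fun p => f p = c)).card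
      = (Finset.univ.filter (fun p => g p = c)).card) :
    ∃ σ : Equiv.Perm (Fin r), ∀ p, f p = g (σ p) := by
  classical
  have hFfib : ∀ c : ι, (Finset.univ.filter (fun p => (f ∘ Tuple.sort f) p = c)).card
      = (Finset.univ.filter (fun p => f p = c)).card :=
    fun c => card_filter_comp_perm (Tuple.sort f) (fun p => f p = c)
  have hGfib : ∀ c : ι, (Finset.univ.filter (fun p => (g ∘ Tuple.sort g) p = c)).card
      = (Finset.univ.filter (fun p => g p = c)).card :=
    fun c => card_filter_comp_perm (Tuple.sort g) (fun p => g p = c)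
  have hFG : f ∘ Tuple.sort f = g ∘ Tuple.sort g := by
    apply monotone_eq_of_fibers _ _ (Tuple.monotone_sort f) (Tuple.monotone_sort g)
    intro c
    rw [hFfib, hGfib]
    exact hfg c
  refine ⟨(Tuple.sort f)⁻¹.trans (Tuple.sort g), fun p => ?_⟩
  have := congrFun hFG ((Tuple.sort f)⁻¹ p)
  simpa using this

lemma mem_dcoset_iff {lam mu : Fin N → ℕ} (d w : Equiv.Perm (Fin r)) :
    w ∈ dcoset r lam mu d ↔ ∀ i j : ℕ, IM r lam mu w i j = IM r lam mu d i j := by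
  constructor
  · rintro ⟨x, hx, y, hy, rfl⟩
    intro i j
    exact IM_mul d hx hy i j
  · intro hIM
    classical
    set f : Fin r → ℕ ×ₗ ℕ :=
      fun p => toLex (blockOf lam (w p), blockOf mu p) with hf
    set g : Fin r → ℕ ×ₗ ℕ :=
      fun p => toLex (blockOf lam (d p), blockOf mu p) with hg
    have hfib : ∀ c : ℕ ×ₗ ℕ, (Finset.univ.filter (fun p => f p = c)).card
        = (Finset.univ.filter (fun p => g p = c)).card := by
      intro c
      have hc : c = toLex ((ofLex c).1, (ofLex c).2) := rfl
      have hfc : ∀ p : Fin r, f p = c ↔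
          (blockOf lam (w p) = (ofLex c).1 ∧ blockOf mu p = (ofLex c).2) := by
        intro p
        rw [hf, hc]
        constructor
        · intro hp
          have := toLex.injective hp
          exact ⟨congrArg Prod.fst this, congrArg Prod.snd this⟩
        · rintro ⟨h1, h2⟩
          simp [h1, h2]
      have hgc : ∀ p : Fin r, g p = c ↔
          (blockOf lam (d p) = (ofLex c).1 ∧ blockOf mu p = (ofLex c).2) := by
        intro p
        rw [hg, hc]
        constructor
        · intro hp
          have := toLex.injective hp
          exact ⟨congrArg Prod.fst this, congrArg Prod.snd this⟩
        · rintro ⟨h1, h2⟩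
          simp [h1, h2]
      calc (Finset.univ.filter (fun p => f p = c)).card
          = IM r lam mu w (ofLex c).1 (ofLex c).2 := by
            unfold IM; congr 1; exact Finset.filter_congr (fun p _ => hfc p)
        _ = IM r lam mu d (ofLex c).1 (ofLex c).2 := hIM _ _
        _ = (Finset.univ.filter (fun p => g p = c)).card := by
            unfold IM; symm; congr 1; exact Finset.filter_congr (fun p _ => hgc p)
    obtain ⟨σ, hσ⟩ := exists_perm_of_fibers f g hfib
    have hσ' : ∀ p : Fin r, blockOf lam (w p) = blockOf lam (d (σ p))
        ∧ blockOf mu p = blockOf mu (σ p) := by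
      intro p
      have := hσ p
      rw [hf, hg] at this
      have h2 := toLex.injective this
      exact ⟨congrArg Prod.fst h2, congrArg Prod.snd h2⟩
    refine ⟨w * σ⁻¹ * d⁻¹, ?_, σ, ?_, by group⟩
    · intro q
      have key := (hσ' (σ⁻¹ (d⁻¹ q))).1
      have h1 : σ (σ⁻¹ (d⁻¹ q)) = d⁻¹ q := by simp
      rw [h1] at key
      have h2 : d (d⁻¹ q) = q := by simp
      rw [h2] at key
      simpa [Equiv.Perm.mul_apply] using key
    · intro p
      exact ((hσ' p).2).symm

end Aux3

section Aux4

lemma sum_indicator {N : ℕ} (c : ℕ) (hc : c < N) (a : ℕ) :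
    ∑ l : Fin N, (if l.val = c then a else 0) = a := by
  rw [Finset.sum_eq_single (⟨c, hc⟩ : Fin N)]
  · simp
  · intro b _ hb
    have hbv : b.val ≠ c := fun he => hb (Fin.ext he)
    simp [hbv]
  · simp

lemma filter_eq_and {α : Type*} [DecidableEq α] [Fintype α] (a : α) (P : α → Prop)
    [DecidablePred P] :
    (Finset.univ.filter (fun x => x = a ∧ P x)).card = if P a then 1 else 0 := by
  split_ifs with hP
  · rw [Finset.card_eq_one]
    refine ⟨a, ?_⟩
    ext x
    simp only [Finset.mem_filter, Finset.mem_univ, true_and, Finset.mem_singleton]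
    constructor
    · rintro ⟨rfl, -⟩; rfl
    · rintro rfl; exact ⟨rfl, hP⟩
  · rw [Finset.card_eq_zero, Finset.filter_eq_empty_iff]
    rintro x - ⟨rfl, hx⟩
    exact hP hx

lemma ptilP_add {N : ℕ} (M : Fin N → Fin N → ℕ) (h : ℕ) (hh : h + 1 < N)
    (hrow : 1 ≤ rowSums M ⟨h + 1, hh⟩) (lamP : Fin N → ℕ)
    (hlamP : ∀ i : Fin N, lamP i =
      if i.val = h then rowSums M i + 1
      else if i.val = h + 1 then rowSums M i - 1 else rowSums M i) (j : ℕ) :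
    ptil lamP j + (if h + 2 ≤ j then 1 else 0)
      = ptil (rowSums M) j + (if h + 1 ≤ j then 1 else 0) := by
  classical
  unfold ptil
  have key : ∀ l : Fin N,
      (if l.val + 1 ≤ j then lamP l else 0) + (if l.val = h + 1 ∧ l.val + 1 ≤ j then 1 else 0)
        = (if l.val + 1 ≤ j then rowSums M l else 0)
          + (if l.val = h ∧ l.val + 1 ≤ j then 1 else 0) := by
    intro l
    have hr : l.val = h + 1 → 1 ≤ rowSums M l := by
      intro he
      have : l = ⟨h + 1, hh⟩ := Fin.ext he
      rw [this]; exact hrow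
    rw [hlamP l]
    by_cases h2 : l.val = h + 1
    · have h3 := hr h2
      split_ifs <;> omega
    · split_ifs <;> omega
  have hsum := Finset.sum_congr rfl (fun l (_ : l ∈ Finset.univ) => key l)
  rw [Finset.sum_add_distrib, Finset.sum_add_distrib] at hsum
  have e1 : ∑ l : Fin N, (if l.val = h + 1 ∧ l.val + 1 ≤ j then 1 else 0)
      = if h + 2 ≤ j then 1 else 0 := by
    have : ∀ l : Fin N, (if l.val = h + 1 ∧ l.val + 1 ≤ j then 1 else 0)
        = if h + 2 ≤ j then (if l.val = h + 1 then 1 else 0) else 0 := by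
      intro l; split_ifs <;> omega
    rw [Finset.sum_congr rfl (fun l _ => this l)]
    split_ifs with hc
    · exact sum_indicator (h + 1) hh 1
    · simp
  have e2 : ∑ l : Fin N, (if l.val = h ∧ l.val + 1 ≤ j then 1 else 0)
      = if h + 1 ≤ j then 1 else 0 := by
    have : ∀ l : Fin N, (if l.val = h ∧ l.val + 1 ≤ j then 1 else 0)
        = if h + 1 ≤ j then (if l.val = h then 1 else 0) else 0 := by
      intro l; split_ifs <;> omega
    rw [Finset.sum_congr rfl (fun l _ => this l)]
    split_ifs with hc
    · exact sum_indicator h (by omega) 1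
    · simp
  rw [e1, e2] at hsum
  exact hsum

end Aux4

/-- Theorem `prod coset`, first decomposition.
Let `M ∈ M(N,r)`, `λ = ro M`, `μ = co M`.  For a fixed `h` (here 0-based: rows `h` and
`h+1` of `M` correspond to the 1-based rows `h+1`, `h+2`, i.e. the paper's `h, h+1`) with
`λ_{h+1} ≥ 1`, set `λ⁺ = λ + e_h - e_{h+1}`.  Then
`(W_{λ⁺} · 1 · W_λ)(W_λ d_M W_μ) = ⋃_{k, m_{h+1,k} ≥ 1} W_{λ⁺} d_{M⁺_{h,k}} W_μ`,
a disjoint union. -/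
theorem stmt0 (N r : ℕ) (hN : 2 ≤ N) (M : Fin N → Fin N → ℕ)
    (hMr : ∑ i, ∑ j, M i j = r)
    (h : ℕ) (hh : h + 1 < N)
    (hrow : 1 ≤ rowSums M ⟨h + 1, hh⟩)
    (lamP : Fin N → ℕ)
    (hlamP : ∀ i : Fin N, lamP i =
      if i.val = h then rowSums M i + 1
      else if i.val = h + 1 then rowSums M i - 1 else rowSums M i)
    (MP : Fin N → (Fin N → Fin N → ℕ))
    (hMP : ∀ k : Fin N, ∀ i j : Fin N, MP k i j =
      if i.val = h ∧ j = k then M i j + 1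
      else if i.val = h + 1 ∧ j = k then M i j - 1 else M i j)
    (dM : Equiv.Perm (Fin r)) (hdM : isDM r M dM)
    (dP : Fin N → Equiv.Perm (Fin r))
    (hdP : ∀ k : Fin N, 1 ≤ M ⟨h + 1, hh⟩ k → isDM r (MP k) (dP k)) :
    ({w : Equiv.Perm (Fin r) |
        ∃ x ∈ dcoset r lamP (rowSums M) 1, ∃ y ∈ dcoset r (rowSums M) (colSums M) dM,
          w = x * y}
      = ⋃ k ∈ {k : Fin N | 1 ≤ M ⟨h + 1, hh⟩ k}, dcoset r lamP (colSums M) (dP k)) ∧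
    ∀ k k' : Fin N, k ≠ k' → 1 ≤ M ⟨h + 1, hh⟩ k → 1 ≤ M ⟨h + 1, hh⟩ k' →
      Disjoint (dcoset r lamP (colSums M) (dP k)) (dcoset r lamP (colSums M) (dP k')) := by
  classical
  -- partial sums of the three compositions
  have hlam_sum : ptil (rowSums M) N = r := by
    rw [ptil_N]; exact hMr
  have hmu_sum : ptil (colSums M) N = r := by
    rw [ptil_N]
    rw [← hMr]
    exact Finset.sum_comm
  have hptilP : ∀ j : ℕ, ptil lamP j
      = ptil (rowSums M) j + (if j = h + 1 then 1 else 0) := by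
    intro j
    have hadd := ptilP_add M h hh hrow lamP hlamP j
    split_ifs at hadd ⊢ <;> omega
  have hlamP_sum : ptil lamP N = r := by
    have := hptilP N
    rw [if_neg (by omega : ¬ N = h + 1)] at this
    omega
  -- the distinguished point p₀
  have hp0lt : ptil (rowSums M) (h + 1) < r := by
    have h1 := ptil_succ (rowSums M) hh
    have h2 : ptil (rowSums M) (h + 1 + 1) ≤ ptil (rowSums M) N := ptil_mono _ (by omega)
    omega
  set p₀ : Fin r := ⟨ptil (rowSums M) (h + 1), hp0lt⟩ with hp₀def
  have hbp0 : blockOf (rowSums M) p₀ = h + 1 := by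
    apply (blockOf_eq_iff hlam_sum p₀ (h + 1)).2
    refine ⟨le_rfl, ?_⟩
    have h1 := ptil_succ (rowSums M) hh
    have : p₀.val = ptil (rowSums M) (h + 1) := rfl
    omega
  -- blockOf with respect to lamP
  have hbP : ∀ x : Fin r, blockOf lamP x = if x = p₀ then h else blockOf (rowSums M) x := by
    intro x
    by_cases hx : x = p₀
    · rw [if_pos hx]
      subst hx
      apply (blockOf_eq_iff hlamP_sum _ h).2
      constructor
      · rw [hptilP h, if_neg (by omega : ¬ h = h + 1)]
        exact ptil_mono _ (by omega)
      · rw [hptilP (h + 1), if_pos rfl]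
        have : p₀.val = ptil (rowSums M) (h + 1) := rfl
        omega
    · rw [if_neg hx]
      obtain ⟨hb1, hb2, hb3⟩ := blockOf_spec hlam_sum x
      apply (blockOf_eq_iff hlamP_sum x (blockOf (rowSums M) x)).2
      rw [hptilP, hptilP]
      have hxv : x.val ≠ ptil (rowSums M) (h + 1) := by
        intro he
        exact hx (Fin.ext he)
      by_cases hb4 : blockOf (rowSums M) x = h + 1
      · rw [if_pos hb4, if_neg (by omega : ¬ blockOf (rowSums M) x + 1 = h + 1)]
        rw [hb4] at hb1 hb2 ⊢
        exact ⟨by omega, by omega⟩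
      · rw [if_neg hb4]
        by_cases hb5 : blockOf (rowSums M) x + 1 = h + 1
        · rw [if_pos hb5]
          omega
        · rw [if_neg hb5]
          exact ⟨hb1, hb2⟩
  -- intersection matrices of the distinguished representatives
  have hIMdM' : ∀ (i j : ℕ) (hi : i < N) (hj : j < N),
      IM r (rowSums M) (colSums M) dM i j = M ⟨i, hi⟩ ⟨j, hj⟩ := by
    intro i j hi hj
    rw [← IM_eq_inter_card hlam_sum hmu_sum dM i j]
    exact hdM.2 ⟨i, hi⟩ ⟨j, hj⟩
  have hMPh : ∀ (k i j : Fin N), i.val = h →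
      MP k i j = M i j + (if j = k then 1 else 0) := by
    intro k i j hi
    rw [hMP]
    by_cases hjk : j = k
    · rw [if_pos ⟨hi, hjk⟩, if_pos hjk]
    · rw [if_neg (fun hc => hjk hc.2), if_neg (fun hc => hjk hc.2), if_neg hjk]
      omega
  have hMPh1 : ∀ (k : Fin N), 1 ≤ M ⟨h + 1, hh⟩ k → ∀ i j : Fin N, i.val = h + 1 →
      MP k i j + (if j = k then 1 else 0) = M i j := by
    intro k hk i j hi
    have hieq : i = ⟨h + 1, hh⟩ := Fin.ext hi
    rw [hMP]
    by_cases hjk : j = k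
    · rw [if_neg (by intro hc; have := hc.1; omega), if_pos ⟨hi, hjk⟩, if_pos hjk]
      have hM1 : 1 ≤ M i j := by rw [hieq, hjk]; exact hk
      omega
    · rw [if_neg (fun hc => hjk hc.2), if_neg (fun hc => hjk hc.2), if_neg hjk]
      omega
  have hMPo : ∀ (k i j : Fin N), i.val ≠ h → i.val ≠ h + 1 → MP k i j = M i j := by
    intro k i j h1 h2
    rw [hMP, if_neg (fun hc => h1 hc.1), if_neg (fun hc => h2 hc.1)]
  have hsum_ind_fin : ∀ (k : Fin N), ∑ j : Fin N, (if j = k then (1:ℕ) else 0) = 1 := by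
    intro k
    rw [Finset.sum_ite_eq' Finset.univ k (fun _ => (1:ℕ))]
    simp
  have hrowMP : ∀ k : Fin N, 1 ≤ M ⟨h + 1, hh⟩ k → rowSums (MP k) = lamP := by
    intro k hk
    funext i
    rw [hlamP i]
    by_cases hi1 : i.val = h
    · rw [if_pos hi1]
      show ∑ j, MP k i j = (∑ j, M i j) + 1
      rw [Finset.sum_congr rfl (fun j _ => hMPh k i j hi1), Finset.sum_add_distrib,
        hsum_ind_fin k]
    · by_cases hi2 : i.val = h + 1
      · rw [if_neg hi1, if_pos hi2]
        have hsum : (∑ j, MP k i j) + 1 = ∑ j, M i j := by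
          rw [← hsum_ind_fin k, ← Finset.sum_add_distrib]
          exact Finset.sum_congr rfl (fun j _ => hMPh1 k hk i j hi2)
        have e2 : rowSums M i = ∑ j, M i j := rfl
        have e3 : rowSums (MP k) i = ∑ j, MP k i j := rfl
        omega
      · rw [if_neg hi1, if_neg hi2]
        show ∑ j, MP k i j = rowSums M i
        rw [Finset.sum_congr rfl (fun j _ => hMPo k i j hi1 hi2)]
        rfl
  have hcolMP : ∀ k : Fin N, 1 ≤ M ⟨h + 1, hh⟩ k → colSums (MP k) = colSums M := by
    intro k hk
    funext j
    by_cases hjk : j = k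
    · show ∑ i, MP k i j = colSums M j
      have hterm : ∀ i : Fin N, MP k i j + (if i.val = h + 1 then 1 else 0)
          = M i j + (if i.val = h then 1 else 0) := by
        intro i
        by_cases hi1 : i.val = h
        · rw [hMPh k i j hi1, if_pos hjk, if_neg (by omega : ¬ i.val = h + 1), if_pos hi1]
        · by_cases hi2 : i.val = h + 1
          · rw [if_pos hi2, if_neg hi1]
            have hx := hMPh1 k hk i j hi2
            rw [if_pos hjk] at hx
            omega
          · rw [hMPo k i j hi1 hi2, if_neg hi2, if_neg hi1]
      have hsum := Finset.sum_congr rfl (fun i (_ : i ∈ Finset.univ) => hterm i)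
      rw [Finset.sum_add_distrib, Finset.sum_add_distrib, sum_indicator (h + 1) hh 1,
        sum_indicator h (by omega) 1] at hsum
      have e4 : colSums M j = ∑ i, M i j := rfl
      omega
    · show ∑ i, MP k i j = colSums M j
      have hterm : ∀ i : Fin N, MP k i j = M i j := by
        intro i
        rw [hMP, if_neg (fun hc => hjk hc.2), if_neg (fun hc => hjk hc.2)]
      rw [Finset.sum_congr rfl (fun i _ => hterm i)]
      rfl
  have hIMdP' : ∀ (k : Fin N), 1 ≤ M ⟨h + 1, hh⟩ k → ∀ (i j : ℕ) (hi : i < N) (hj : j < N),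
      IM r lamP (colSums M) (dP k) i j = MP k ⟨i, hi⟩ ⟨j, hj⟩ := by
    intro k hk i j hi hj
    have h1 := (hdP k hk).2 ⟨i, hi⟩ ⟨j, hj⟩
    rw [hrowMP k hk, hcolMP k hk] at h1
    rw [← IM_eq_inter_card hlamP_sum hmu_sum (dP k) i j]
    exact h1
  have KEY : ∀ u : Equiv.Perm (Fin r),
      (∀ i j : ℕ, IM r (rowSums M) (colSums M) u i j
        = IM r (rowSums M) (colSums M) dM i j) →
      ∀ k : Fin N, k.val = blockOf (colSums M) (u⁻¹ p₀) →
      1 ≤ M ⟨h + 1, hh⟩ k ∧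
        ∀ i j : ℕ, IM r lamP (colSums M) u i j = IM r lamP (colSums M) (dP k) i j := by
    intro u hu k hk
    set q₀ : Fin r := u⁻¹ p₀ with hq₀def
    have hq0 : u q₀ = p₀ := by simp [hq₀def]
    have hxq : ∀ x : Fin r, u x = p₀ ↔ x = q₀ := by
      intro x
      constructor
      · intro he
        rw [hq₀def, ← he]
        simp
      · rintro rfl
        exact hq0
    have hbPu : ∀ x : Fin r,
        blockOf lamP (u x) = if x = q₀ then h else blockOf (rowSums M) (u x) := by
      intro x
      rw [hbP (u x)]
      exact if_congr (hxq x) rfl rfl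
    have hbuq : blockOf (rowSums M) (u q₀) = h + 1 := by rw [hq0]; exact hbp0
    -- 1 ≤ M (h+1) k
    have hmemq : q₀ ∈ Finset.univ.filter
        (fun x : Fin r => blockOf (rowSums M) (u x) = h + 1
          ∧ blockOf (colSums M) x = k.val) := by
      simp only [Finset.mem_filter, Finset.mem_univ, true_and]
      exact ⟨hbuq, hk.symm⟩
    have hpos : 0 < IM r (rowSums M) (colSums M) u (h + 1) k.val :=
      Finset.card_pos.2 ⟨q₀, hmemq⟩
    have hM1 : 1 ≤ M ⟨h + 1, hh⟩ k := by
      have h1 := hu (h + 1) k.val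
      have h2 := hIMdM' (h + 1) k.val hh k.isLt
      have h3 : (⟨k.val, k.isLt⟩ : Fin N) = k := Fin.ext rfl
      rw [h3] at h2
      omega
    refine ⟨hM1, ?_⟩
    -- the three block computations
    have hA : ∀ i' j' : ℕ, i' ≠ h → i' ≠ h + 1 →
        IM r lamP (colSums M) u i' j' = IM r (rowSums M) (colSums M) u i' j' := by
      intro i' j' hi1 hi2
      unfold IM
      congr 1
      apply Finset.filter_congr
      intro x _
      rw [hbPu x]
      by_cases hx : x = q₀
      · rw [if_pos hx]
        subst hx
        constructor
        · rintro ⟨h1, -⟩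
          exact absurd h1.symm hi1
        · rintro ⟨h1, -⟩
          rw [hbuq] at h1
          exact absurd h1.symm hi2
      · rw [if_neg hx]
    have hB : ∀ j' : ℕ, IM r lamP (colSums M) u h j'
        = IM r (rowSums M) (colSums M) u h j'
          + (if blockOf (colSums M) q₀ = j' then 1 else 0) := by
      intro j'
      have hset : Finset.univ.filter
            (fun x : Fin r => blockOf lamP (u x) = h ∧ blockOf (colSums M) x = j')
          = Finset.univ.filter
              (fun x : Fin r => blockOf (rowSums M) (u x) = h
                ∧ blockOf (colSums M) x = j')
            ∪ Finset.univ.filter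
              (fun x : Fin r => x = q₀ ∧ blockOf (colSums M) x = j') := by
        ext x
        simp only [Finset.mem_filter, Finset.mem_univ, true_and, Finset.mem_union]
        rw [hbPu x]
        by_cases hx : x = q₀
        · rw [if_pos hx]
          subst hx
          constructor
          · rintro ⟨-, h2⟩
            exact Or.inr ⟨rfl, h2⟩
          · rintro (⟨h1, h2⟩ | ⟨-, h2⟩)
            · rw [hbuq] at h1
              omega
            · exact ⟨rfl, h2⟩
        · rw [if_neg hx]
          constructor
          · rintro ⟨h1, h2⟩
            exact Or.inl ⟨h1, h2⟩
          · rintro (⟨h1, h2⟩ | ⟨h1, -⟩)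
            · exact ⟨h1, h2⟩
            · exact absurd h1 hx
      have hdisj : Disjoint
          (Finset.univ.filter
            (fun x : Fin r => blockOf (rowSums M) (u x) = h
              ∧ blockOf (colSums M) x = j'))
          (Finset.univ.filter
            (fun x : Fin r => x = q₀ ∧ blockOf (colSums M) x = j')) := by
        rw [Finset.disjoint_left]
        intro x hx1 hx2
        simp only [Finset.mem_filter, Finset.mem_univ, true_and] at hx1 hx2
        obtain ⟨h1, -⟩ := hx1
        obtain ⟨rfl, -⟩ := hx2
        rw [hbuq] at h1
        omega
      show (Finset.univ.filter
          (fun x : Fin r => blockOf lamP (u x) = h ∧ blockOf (colSums M) x = j')).card = _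
      rw [hset, Finset.card_union_of_disjoint hdisj,
        filter_eq_and q₀ (fun x => blockOf (colSums M) x = j')]
      rfl
    have hC : ∀ j' : ℕ, IM r (rowSums M) (colSums M) u (h + 1) j'
        = IM r lamP (colSums M) u (h + 1) j'
          + (if blockOf (colSums M) q₀ = j' then 1 else 0) := by
      intro j'
      have hset : Finset.univ.filter
            (fun x : Fin r => blockOf (rowSums M) (u x) = h + 1
              ∧ blockOf (colSums M) x = j')
          = Finset.univ.filter
              (fun x : Fin r => blockOf lamP (u x) = h + 1 ∧ blockOf (colSums M) x = j')
            ∪ Finset.univ.filter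
              (fun x : Fin r => x = q₀ ∧ blockOf (colSums M) x = j') := by
        ext x
        simp only [Finset.mem_filter, Finset.mem_univ, true_and, Finset.mem_union]
        rw [hbPu x]
        by_cases hx : x = q₀
        · rw [if_pos hx]
          subst hx
          constructor
          · rintro ⟨-, h2⟩
            exact Or.inr ⟨rfl, h2⟩
          · rintro (⟨h1, h2⟩ | ⟨-, h2⟩)
            · omega
            · exact ⟨hbuq, h2⟩
        · rw [if_neg hx]
          constructor
          · rintro ⟨h1, h2⟩
            exact Or.inl ⟨h1, h2⟩
          · rintro (⟨h1, h2⟩ | ⟨h1, -⟩)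
            · exact ⟨h1, h2⟩
            · exact absurd h1 hx
      have hdisj : Disjoint
          (Finset.univ.filter
            (fun x : Fin r => blockOf lamP (u x) = h + 1 ∧ blockOf (colSums M) x = j'))
          (Finset.univ.filter
            (fun x : Fin r => x = q₀ ∧ blockOf (colSums M) x = j')) := by
        rw [Finset.disjoint_left]
        intro x hx1 hx2
        simp only [Finset.mem_filter, Finset.mem_univ, true_and] at hx1 hx2
        obtain ⟨h1, -⟩ := hx1
        obtain ⟨rfl, -⟩ := hx2
        rw [hbPu q₀, if_pos rfl] at h1
        omega
      show (Finset.univ.filter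
          (fun x : Fin r => blockOf (rowSums M) (u x) = h + 1
            ∧ blockOf (colSums M) x = j')).card = _
      rw [hset, Finset.card_union_of_disjoint hdisj,
        filter_eq_and q₀ (fun x => blockOf (colSums M) x = j')]
      rfl
    -- now the pointwise comparison
    intro i j
    rcases Nat.lt_or_ge i N with hiN | hiN
    · rcases Nat.lt_or_ge j N with hjN | hjN
      · rw [hIMdP' k hM1 i j hiN hjN, hMP k ⟨i, hiN⟩ ⟨j, hjN⟩]
        have hvi : (⟨i, hiN⟩ : Fin N).val = i := rfl
        have hjkiff : ((⟨j, hjN⟩ : Fin N) = k) ↔ blockOf (colSums M) q₀ = j := by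
          constructor
          · intro he
            have hjv : j = k.val := congrArg Fin.val he
            rw [← hk]
            exact hjv.symm
          · intro he
            apply Fin.ext
            show j = k.val
            rw [hk, he]
        by_cases hi1 : i = h
        · have hi1' : h = i := hi1.symm
          subst hi1'
          rw [hB j, hu h j, hIMdM' h j hiN hjN]
          by_cases hjq : blockOf (colSums M) q₀ = j
          · rw [if_pos hjq, if_pos (show (⟨h, hiN⟩ : Fin N).val = h ∧ (⟨j, hjN⟩ : Fin N) = k
              from ⟨rfl, hjkiff.2 hjq⟩)]
          · rw [if_neg hjq,
              if_neg (fun hc => hjq (hjkiff.1 hc.2)),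
              if_neg (fun hc => by have := hc.1; omega : ¬((⟨h, hiN⟩ : Fin N).val = h + 1 ∧ (⟨j, hjN⟩ : Fin N) = k))]
            omega
        · by_cases hi2 : i = h + 1
          · subst hi2
            have hCj := hC j
            rw [hu (h + 1) j, hIMdM' (h + 1) j hiN hjN] at hCj
            by_cases hjq : blockOf (colSums M) q₀ = j
            · rw [if_pos hjq] at hCj
              rw [if_neg (fun hc => by have := hc.1; omega :
                  ¬((⟨h + 1, hiN⟩ : Fin N).val = h ∧ (⟨j, hjN⟩ : Fin N) = k)),
                if_pos (show (⟨h + 1, hiN⟩ : Fin N).val = h + 1 ∧ (⟨j, hjN⟩ : Fin N) = k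
                  from ⟨rfl, hjkiff.2 hjq⟩)]
              have hMeq : M ⟨h + 1, hiN⟩ ⟨j, hjN⟩ = M ⟨h + 1, hh⟩ k := by
                have e1 : (⟨h + 1, hiN⟩ : Fin N) = ⟨h + 1, hh⟩ := Fin.ext rfl
                have e2 : (⟨j, hjN⟩ : Fin N) = k := hjkiff.2 hjq
                rw [e1, e2]
              omega
            · rw [if_neg hjq] at hCj
              rw [if_neg (fun hc => by have := hc.1; omega :
                  ¬((⟨h + 1, hiN⟩ : Fin N).val = h ∧ (⟨j, hjN⟩ : Fin N) = k)),
                if_neg (fun hc => hjq (hjkiff.1 hc.2))]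
              omega
          · rw [hA i j hi1 hi2, hu i j, hIMdM' i j hiN hjN,
              if_neg (fun hc => hi1 (by rw [← hc.1] : i = h)),
              if_neg (fun hc => hi2 (by rw [← hc.1] : i = h + 1))]
      · rw [IM_out hlamP_sum hmu_sum u (Or.inr hjN),
          IM_out hlamP_sum hmu_sum (dP k) (Or.inr hjN)]
    · rw [IM_out hlamP_sum hmu_sum u (Or.inl hiN),
        IM_out hlamP_sum hmu_sum (dP k) (Or.inl hiN)]
  have hhN : h < N := by omega
  constructor
  · -- the set identity
    ext w
    simp only [Set.mem_setOf_eq]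
    constructor
    · rintro ⟨x₁, ⟨a, ha, c, hc, rfl⟩, y₁, ⟨c₂, hc₂, b, hb, rfl⟩, rfl⟩
      set u : Equiv.Perm (Fin r) := (c * c₂) * dM with hudef
      have hcc : c * c₂ ∈ young r (rowSums M) := mul_mem hc hc₂
      have hu : ∀ i j : ℕ, IM r (rowSums M) (colSums M) u i j
          = IM r (rowSums M) (colSums M) dM i j := by
        intro i j
        have hx := IM_mul (lam := rowSums M) (mu := colSums M) dM hcc
          (Subgroup.one_mem (young r (colSums M))) i j
        rwa [mul_one] at hx
      have hkN : blockOf (colSums M) (u⁻¹ p₀) < N := (blockOf_spec hmu_sum (u⁻¹ p₀)).2.2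
      obtain ⟨hM1, hIMu⟩ := KEY u hu ⟨blockOf (colSums M) (u⁻¹ p₀), hkN⟩ rfl
      apply Set.mem_biUnion
        (show (⟨blockOf (colSums M) (u⁻¹ p₀), hkN⟩ : Fin N)
          ∈ {k : Fin N | 1 ≤ M ⟨h + 1, hh⟩ k} from hM1)
      apply (mem_dcoset_iff _ _).2
      intro i j
      have hw : a * 1 * c * (c₂ * dM * b) = a * u * b := by rw [hudef]; group
      rw [hw, IM_mul u ha hb i j]
      exact hIMu i j
    · intro hw
      rw [Set.mem_iUnion₂] at hw
      obtain ⟨k, hk, hw⟩ := hw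
      have hk' : 1 ≤ M ⟨h + 1, hh⟩ k := hk
      have hIMw := (mem_dcoset_iff (dP k) w).1 hw
      have hpos : 0 < IM r (rowSums M) (colSums M) dM (h + 1) k.val := by
        rw [hIMdM' (h + 1) k.val hh k.isLt]
        have hkk : (⟨k.val, k.isLt⟩ : Fin N) = k := Fin.ext rfl
        rw [hkk]
        exact hk'
      obtain ⟨q, hq⟩ := Finset.card_pos.1 hpos
      simp only [Finset.mem_filter, Finset.mem_univ, true_and] at hq
      have hswap : Equiv.swap p₀ (dM q) ∈ young r (rowSums M) :=
        swap_mem_young (by rw [hbp0, hq.1])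
      set u : Equiv.Perm (Fin r) := Equiv.swap p₀ (dM q) * dM with hudef
      have hu : ∀ i j : ℕ, IM r (rowSums M) (colSums M) u i j
          = IM r (rowSums M) (colSums M) dM i j := by
        intro i j
        have hx := IM_mul (lam := rowSums M) (mu := colSums M) dM hswap
          (Subgroup.one_mem (young r (colSums M))) i j
        rwa [mul_one] at hx
      have huq : u q = p₀ := by
        show (Equiv.swap p₀ (dM q)) (dM q) = p₀
        exact Equiv.swap_apply_right _ _
      have hq0 : u⁻¹ p₀ = q := by rw [← huq]; simp
      have hkval : k.val = blockOf (colSums M) (u⁻¹ p₀) := by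
        rw [hq0]
        exact hq.2.symm
      obtain ⟨-, hIMu⟩ := KEY u hu k hkval
      have hwu : w ∈ dcoset r lamP (colSums M) u :=
        (mem_dcoset_iff u w).2 (fun i j => (hIMw i j).trans (hIMu i j).symm)
      obtain ⟨x, hx, b, hb, rfl⟩ := hwu
      refine ⟨x, ⟨x, hx, 1, Subgroup.one_mem _, by rw [mul_one, mul_one]⟩,
        Equiv.swap p₀ (dM q) * dM * b,
        ⟨Equiv.swap p₀ (dM q), hswap, b, hb, rfl⟩, ?_⟩
      rw [hudef]
      group
  · -- disjointness
    intro k k' hne hk hk'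
    rw [Set.disjoint_left]
    intro w hw hw'
    have h1 := (mem_dcoset_iff (dP k) w).1 hw
    have h2 := (mem_dcoset_iff (dP k') w).1 hw'
    have e1 := hIMdP' k hk h k.val hhN k.isLt
    have e2 := hIMdP' k' hk' h k.val hhN k.isLt
    have e3 : IM r lamP (colSums M) (dP k) h k.val
        = IM r lamP (colSums M) (dP k') h k.val := by
      rw [← h1 h k.val, h2 h k.val]
    rw [e1, e2] at e3
    have hkk : (⟨k.val, k.isLt⟩ : Fin N) = k := Fin.ext rfl
    rw [hkk, hMP k ⟨h, hhN⟩ k, hMP k' ⟨h, hhN⟩ k] at e3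
    rw [if_pos ⟨rfl, rfl⟩, if_neg (fun hc => hne hc.2),
      if_neg (fun hc => hne hc.2)] at e3
    omega
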